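/- In the α-β cost model, the recursive doubling sparse allreduce over P = 2^m nodes (m ≥ 1) with per-node sparsity k has total cost T bounded by log₂(P)·α + log₂(P)·k·β_s ≤ T ≤ log₂(P)·α + (P-1)·k·β_s, where the lower bound corresponds to fully overlapping index sets (intermediate results of constant size k per stage) and the upper bound to fully disjoint sets (2^{t-1}·k items at stage t). -/

import Mathlib

lemma geom_sum_Icc_aux (m : ℕ) : ∑ t ∈ Finset.Icc 1 m, (2:ℝ) ^ (t - 1) = 2 ^ m - 1 := by
  induction m with
  | zero => simp
  | succ n ih =>
    rw [Finset.sum_Icc_succ_top (by omega), ih]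
    simp only [Nat.add_sub_cancel]
    ring


/-- α-β cost of recursive doubling sparse allreduce over `P = 2^m` nodes:
if at stage `t ∈ {1, …, m}` each node transmits `L t` items with
`k ≤ L t ≤ 2^(t-1) * k` (fully overlapping vs. fully disjoint index sets),
then the total cost `T = ∑_{t=1}^{m} (α + L t * βs)` satisfies
`log₂(P) * α + log₂(P) * k * βs ≤ T ≤ log₂(P) * α + (P - 1) * k * βs`. -/
theorem recursive_doubling_cost_bounds (m P : ℕ) (hm : 1 ≤ m)
    (hP : P = 2 ^ m) (k α βs : ℝ) (hk : 0 ≤ k) (hα : 0 < α) (hβ : 0 < βs)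
    (L : ℕ → ℝ)
    (hL : ∀ t ∈ Finset.Icc 1 m, k ≤ L t ∧ L t ≤ 2 ^ (t - 1) * k)
    (T : ℝ) (hT : T = ∑ t ∈ Finset.Icc 1 m, (α + L t * βs)) :
    (Nat.log2 P : ℝ) * α + (Nat.log2 P : ℝ) * k * βs ≤ T ∧
      T ≤ (Nat.log2 P : ℝ) * α + ((P : ℝ) - 1) * k * βs := by
  have hlog : Nat.log2 P = m := by
    subst hP
    simpa using Nat.log2_two_pow (n := m)
  subst hT
  have hcard : (Finset.Icc 1 m).card = m := by simp
  constructor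
  · have h1 : ∑ t ∈ Finset.Icc 1 m, (α + k * βs) ≤
        ∑ t ∈ Finset.Icc 1 m, (α + L t * βs) := by
      apply Finset.sum_le_sum
      intro t ht
      have := (hL t ht).1
      nlinarith [hβ]
    have h2 : ∑ t ∈ Finset.Icc 1 m, (α + k * βs) = m * (α + k * βs) := by
      rw [Finset.sum_const, hcard]; simp [nsmul_eq_mul]; ring
    rw [hlog]
    nlinarith [h1, h2]
  · have h1 : ∑ t ∈ Finset.Icc 1 m, (α + L t * βs) ≤
        ∑ t ∈ Finset.Icc 1 m, (α + 2 ^ (t - 1) * k * βs) := by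
      apply Finset.sum_le_sum
      intro t ht
      have := (hL t ht).2
      nlinarith [hβ]
    have hgeom := geom_sum_Icc_aux m
    have h2 : ∑ t ∈ Finset.Icc 1 m, (α + 2 ^ (t - 1) * k * βs)
        = m * α + (2 ^ m - 1) * k * βs := by
      rw [Finset.sum_add_distrib, Finset.sum_const, hcard, ← Finset.sum_mul,
        ← Finset.sum_mul, hgeom]
      simp [nsmul_eq_mul]
    rw [hlog, hP]
    push_cast
    nlinarith [h1, h2]
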